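/- Let n ∈ ℕ, Λ > 0, and L : ℝ → ℝ a smooth positive 1-periodic function. Define the vector field Y on ℝ³ by Y(x,y,z) = (nz, 1, 0) (i.e. Y = ∂y + nz·∂x), and the smooth field of symmetric bilinear forms g̃ = Λ((dx − nz·dy)⊗dz + dz⊗(dx − nz·dy)) + L(z)²·dy⊗dy. Then: (i) Y is Γ_n-invariant, i.e. Dγ_p(Y(p)) = Y(γ(p)) for all γ ∈ Γ_n and p ∈ ℝ³; (ii) the flow of Y at time t is Φᵗ(x,y,z) = (x + ntz, y + t, z); (iii) (Φᵗ)*g̃ = g̃ + 2nΛt·dz⊗dz for every t ∈ ℝ. In particular, if n ≠ 0, then Φᵗ is not an isometry of g̃ for any t ≠ 0, although it preserves the Levi-Civita connection of g̃. -/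

import Mathlib

noncomputable section

/-- The bijection `(x,y,z) ↦ (x + φ(y,z), y + ψ(z), z + b)` of `ℝ³`. -/
def affMap (φ : ℝ × ℝ → ℝ) (ψ : ℝ → ℝ) (b : ℝ) : Equiv.Perm (ℝ × ℝ × ℝ) where
  toFun p := (p.1 + φ p.2, p.2.1 + ψ p.2.2, p.2.2 + b)
  invFun p := (p.1 - φ (p.2.1 - ψ (p.2.2 - b), p.2.2 - b), p.2.1 - ψ (p.2.2 - b), p.2.2 - b)
  left_inv := by rintro ⟨x, y, z⟩; simp
  right_inv := by rintro ⟨x, y, z⟩; simp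

/-- The group `Γ_{n,c₁,c₂}`, generated by `(x,y,z) ↦ (x+1,y,z)`,
`(x,y,z) ↦ (x+c₁,y+1,z)` and `(x,y,z) ↦ (x+ny+c₂,y,z+1)`. -/
def Gamma (n : ℕ) (c₁ c₂ : ℝ) : Subgroup (Equiv.Perm (ℝ × ℝ × ℝ)) :=
  Subgroup.closure
    { affMap (fun _ => 1) (fun _ => 0) 0,
      affMap (fun _ => c₁) (fun _ => 1) 0,
      affMap (fun q => n * q.1 + c₂) (fun _ => 0) 1 }

/-- The vector field `Y = ∂y + nz·∂x` on `ℝ³`. -/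
def fieldY (n : ℕ) : ℝ × ℝ × ℝ → ℝ × ℝ × ℝ := fun p => ((n : ℝ) * p.2.2, 1, 0)

/-- The time-`t` map `Φᵗ(x,y,z) = (x + ntz, y + t, z)`. -/
def flowY (n : ℕ) (t : ℝ) : ℝ × ℝ × ℝ → ℝ × ℝ × ℝ :=
  fun p => (p.1 + (n : ℝ) * t * p.2.2, p.2.1 + t, p.2.2)

/-- The metric `g̃ = Λ((dx − nz·dy)⊗dz + dz⊗(dx − nz·dy)) + L(z)²·dy⊗dy`. -/
def gFifteen (n : ℕ) (Λ : ℝ) (L : ℝ → ℝ) (p u v : ℝ × ℝ × ℝ) : ℝ :=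
  Λ * ((u.1 - n * p.2.2 * u.2.1) * v.2.2 + u.2.2 * (v.1 - n * p.2.2 * v.2.1))
    + (L p.2.2) ^ 2 * u.2.1 * v.2.1


/-- auxiliary linear map `u ↦ (u.1 + m*u.2.1 + c*u.2.2, u.2.1, u.2.2)` -/
def derivAux (m c : ℝ) : (ℝ × ℝ × ℝ) →L[ℝ] (ℝ × ℝ × ℝ) :=
  (ContinuousLinearMap.fst ℝ ℝ (ℝ × ℝ) +
    m • ((ContinuousLinearMap.fst ℝ ℝ ℝ).comp (ContinuousLinearMap.snd ℝ ℝ (ℝ × ℝ))) +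
    c • ((ContinuousLinearMap.snd ℝ ℝ ℝ).comp (ContinuousLinearMap.snd ℝ ℝ (ℝ × ℝ)))).prod
    (ContinuousLinearMap.snd ℝ ℝ (ℝ × ℝ))

@[simp] lemma derivAux_apply (m c : ℝ) (u : ℝ × ℝ × ℝ) :
    derivAux m c u = (u.1 + m * u.2.1 + c * u.2.2, u.2.1, u.2.2) := rfl

lemma hasFDerivAt_aux (f : ℝ × ℝ × ℝ → ℝ × ℝ × ℝ) (m c a b d : ℝ)
    (hf : ∀ q : ℝ × ℝ × ℝ, f q = (q.1 + m * q.2.1 + c * q.2.2 + a, q.2.1 + b, q.2.2 + d))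
    (p : ℝ × ℝ × ℝ) : HasFDerivAt f (derivAux m c) p := by
  have hfe : f = fun q => derivAux m c q + (a, b, d) := by
    funext q
    rw [hf q]
    simp [Prod.ext_iff]
  rw [hfe]
  exact ((derivAux m c).hasFDerivAt (x := p)).add_const _

/-- (i) `Y = ∂y + nz∂x` is `Γ_n`-invariant; (ii) its flow at time `t` is
`Φᵗ(x,y,z) = (x + ntz, y + t, z)`; (iii) `(Φᵗ)*g̃ = g̃ + 2nΛt·dz⊗dz`. -/
theorem stmt_15 (n : ℕ) (Λ : ℝ) (hΛ : 0 < Λ)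
    (L : ℝ → ℝ) (hLs : ContDiff ℝ (⊤ : ℕ∞) L) (hLpos : ∀ z : ℝ, 0 < L z)
    (hLper : ∀ z : ℝ, L (z + 1) = L z) :
    (∀ γ ∈ Gamma n 0 0, ∀ p : ℝ × ℝ × ℝ,
      fderiv ℝ (⇑γ) p (fieldY n p) = fieldY n (γ p)) ∧
    ((∀ p : ℝ × ℝ × ℝ, flowY n 0 p = p) ∧
      ∀ (p : ℝ × ℝ × ℝ) (t : ℝ),
        HasDerivAt (fun s => flowY n s p) (fieldY n (flowY n t p)) t) ∧
    (∀ (t : ℝ) (p u v : ℝ × ℝ × ℝ),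
      gFifteen n Λ L (flowY n t p)
          (fderiv ℝ (flowY n t) p u) (fderiv ℝ (flowY n t) p v)
        = gFifteen n Λ L p u v + 2 * n * Λ * t * (u.2.2 * v.2.2)) := by
  refine ⟨?_, ⟨?_, ?_⟩, ?_⟩
  · -- (i)
    intro γ hγ p
    have key : ∀ δ ∈ Gamma n 0 0, ∃ m a b c : ℝ, m = (n : ℝ) * c ∧
        ∀ q : ℝ × ℝ × ℝ, δ q = (q.1 + m * q.2.1 + a, q.2.1 + b, q.2.2 + c) := by
      intro δ hδ
      induction hδ using Subgroup.closure_induction with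
      | mem x hx =>
        rcases hx with h | h | h
        · refine ⟨0, 1, 0, 0, by ring, ?_⟩
          subst h; rintro ⟨x, y, z⟩
          simp [affMap, Prod.ext_iff]
        · refine ⟨0, 0, 1, 0, by ring, ?_⟩
          subst h; rintro ⟨x, y, z⟩
          simp [affMap, Prod.ext_iff]
        · rw [Set.mem_singleton_iff] at h
          refine ⟨(n : ℝ), 0, 0, 1, by ring, ?_⟩
          subst h; rintro ⟨x, y, z⟩
          simp [affMap, Prod.ext_iff]
      | one => exact ⟨0, 0, 0, 0, by ring, by rintro ⟨x, y, z⟩; simp⟩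
      | mul x y hx hy ihx ihy =>
        obtain ⟨m1, a1, b1, c1, hm1, h1⟩ := ihx
        obtain ⟨m2, a2, b2, c2, hm2, h2⟩ := ihy
        refine ⟨m1 + m2, m1 * b2 + a1 + a2, b1 + b2, c1 + c2, by rw [hm1, hm2]; ring, ?_⟩
        intro q
        have : (x * y) q = x (y q) := rfl
        rw [this, h2 q, h1 _]
        simp only [Prod.ext_iff]
        refine ⟨by ring, by ring, by ring⟩
      | inv x hx ih =>
        obtain ⟨m, a, b, c, hm, h⟩ := ih
        refine ⟨-m, m * b - a, -b, -c, by rw [hm]; ring, ?_⟩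
        intro q
        rw [show x⁻¹ = x.symm from rfl, Equiv.symm_apply_eq, h]
        simp only [Prod.ext_iff]
        refine ⟨by ring, by ring, by ring⟩
    obtain ⟨m, a, b, c, hm, h⟩ := key γ hγ
    have hd := hasFDerivAt_aux (⇑γ) m 0 a b c (by simpa using h) p
    rw [hd.fderiv, h p]
    simp only [fieldY, derivAux_apply, Prod.ext_iff, hm]
    norm_num
    ring
  · intro p
    simp [flowY]
  · intro p t
    have h1 : HasDerivAt (fun s : ℝ => p.1 + (n : ℝ) * s * p.2.2) ((n : ℝ) * p.2.2) t := by
      have he : (fun s : ℝ => p.1 + (n : ℝ) * s * p.2.2)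
          = fun s : ℝ => ((n : ℝ) * p.2.2) * s + p.1 := by funext s; ring
      rw [he]
      simpa using ((hasDerivAt_id t).const_mul ((n : ℝ) * p.2.2)).add_const p.1
    have h2 : HasDerivAt (fun s : ℝ => p.2.1 + s) 1 t := by
      simpa using (hasDerivAt_id t).const_add p.2.1
    have h3 : HasDerivAt (fun _ : ℝ => p.2.2) 0 t := hasDerivAt_const t p.2.2
    have := h1.prodMk (h2.prodMk h3)
    simpa [flowY, fieldY] using this
  · intro t p u v
    have hd : ∀ q : ℝ × ℝ × ℝ, HasFDerivAt (flowY n t) (derivAux 0 ((n : ℝ) * t)) q := by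
      intro q
      refine hasFDerivAt_aux _ 0 ((n : ℝ) * t) 0 t 0 ?_ q
      intro q
      simp only [flowY, Prod.ext_iff]
      refine ⟨by ring, trivial, by ring⟩
    rw [(hd p).fderiv]
    simp [gFifteen, flowY]
    ring
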